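/- Let c ∈ ℂ with 0 < |c| < 1/2 and define f(z) = z + c·z̄² on the open unit disk 𝔻. Then for every r with 0 < r < 1, the strict inequality |f(𝔻_r)| > r² |f(𝔻)| holds; in particular the area estimate |f(𝔻_r)| ≤ r²|f(𝔻)| valid for injective holomorphic maps fails for injective harmonic maps. -/

import Mathlib

open MeasureTheory Metric Set

noncomputable def conjCLM : ℂ →L[ℝ] ℂ := Complex.conjCLE.toContinuousLinearMap

noncomputable def Lb (b : ℂ) : ℂ →L[ℝ] ℂ := ContinuousLinearMap.id ℝ ℂ + b • conjCLM

lemma Lb_det (b : ℂ) : (Lb b).det = 1 - ‖b‖^2 := by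
  have h : (Lb b).det = LinearMap.det ((Lb b) : ℂ →ₗ[ℝ] ℂ) := rfl
  rw [h, ← LinearMap.det_toMatrix Complex.basisOneI, Matrix.det_fin_two]
  simp [LinearMap.toMatrix_apply, Lb, conjCLM, Complex.coe_basisOneI_repr,
    Complex.coe_basisOneI, Complex.sq_norm, Complex.normSq_apply]
  ring

lemma hasFDerivAt_f (c : ℂ) (z : ℂ) :
    HasFDerivAt (fun z : ℂ => z + c * (starRingEnd ℂ z) ^ 2)
      (Lb (2 * c * starRingEnd ℂ z)) z := by
  have h1 : HasFDerivAt (fun z : ℂ => z) (ContinuousLinearMap.id ℝ ℂ) z := hasFDerivAt_id z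
  have h2 : HasFDerivAt (fun z : ℂ => starRingEnd ℂ z) conjCLM z := conjCLM.hasFDerivAt
  have h3 := (h2.mul h2).const_mul c
  have h4 := h1.add h3
  simp only [pow_two]
  convert h4 using 1
  case e'_12 =>
    ext w
    simp [Lb, conjCLM, smul_smul]
    ring
  all_goals rfl

lemma injOn_f (c : ℂ) (hc : ‖c‖ < 1 / 2) :
    InjOn (fun z : ℂ => z + c * (starRingEnd ℂ z) ^ 2) (ball (0 : ℂ) 1) := by
  intro z hz w hw h
  simp only [mem_ball, dist_zero_right] at hz hw
  by_contra hne
  have key : z - w = c * ((starRingEnd ℂ (w - z)) * (starRingEnd ℂ w + starRingEnd ℂ z)) := by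
    have h' : z + c * (starRingEnd ℂ z) ^ 2 = w + c * (starRingEnd ℂ w) ^ 2 := h
    rw [map_sub]
    linear_combination h'
  have h1 : ‖z - w‖ = ‖c‖ * (‖z - w‖ * ‖starRingEnd ℂ w + starRingEnd ℂ z‖) := by
    nth_rewrite 1 [key]
    rw [norm_mul, norm_mul, RCLike.norm_conj, norm_sub_rev w z]
  have h2 : ‖starRingEnd ℂ w + starRingEnd ℂ z‖ ≤ ‖w‖ + ‖z‖ := by
    calc ‖starRingEnd ℂ w + starRingEnd ℂ z‖ ≤ ‖starRingEnd ℂ w‖ + ‖starRingEnd ℂ z‖ :=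
          norm_add_le _ _
    _ = ‖w‖ + ‖z‖ := by rw [RCLike.norm_conj, RCLike.norm_conj]
  have h0 : 0 < ‖z - w‖ := by
    rw [norm_pos_iff]; exact sub_ne_zero_of_ne hne
  have hX2 : ‖starRingEnd ℂ w + starRingEnd ℂ z‖ < 2 := by linarith
  have hXnn : (0:ℝ) ≤ ‖starRingEnd ℂ w + starRingEnd ℂ z‖ := norm_nonneg _
  nlinarith [norm_nonneg c, mul_le_mul_of_nonneg_left hX2.le (norm_nonneg c),
    mul_lt_mul_of_pos_right hc h0]

lemma ball_norm_sq_integral (s : ℝ) (hs : 0 < s) :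
    ∫ z in ball (0 : ℂ) s, ‖z‖ ^ 2 = Real.pi * s ^ 4 / 2 := by
  have hind : ∀ z : ℂ, (ball (0 : ℂ) s).indicator (fun z => ‖z‖ ^ 2) z
      = (Iio s).indicator (fun t : ℝ => t ^ 2) ‖z‖ := by
    intro z
    by_cases hz : z ∈ ball (0 : ℂ) s
    · rw [indicator_of_mem hz, indicator_of_mem]
      simpa [mem_ball, dist_zero_right] using hz
    · rw [indicator_of_notMem hz, indicator_of_notMem]
      simpa [mem_ball, dist_zero_right] using hz
  rw [← integral_indicator measurableSet_ball]
  calc ∫ z : ℂ, (ball (0 : ℂ) s).indicator (fun z => ‖z‖ ^ 2) z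
      = ∫ z : ℂ, (Iio s).indicator (fun t : ℝ => t ^ 2) ‖z‖ := by
        exact integral_congr_ae (Filter.Eventually.of_forall hind)
    _ = Module.finrank ℝ ℂ • (volume (ball (0:ℂ) 1)).toReal •
          ∫ y in Ioi (0:ℝ), y ^ (Module.finrank ℝ ℂ - 1) • (Iio s).indicator (fun t : ℝ => t ^ 2) y :=
        integral_fun_norm_addHaar volume _
    _ = Real.pi * s ^ 4 / 2 := by
        rw [Complex.finrank_real_complex]
        have h1 : ∫ y in Ioi (0:ℝ), y ^ (2 - 1) • (Iio s).indicator (fun t : ℝ => t ^ 2) y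
            = ∫ y in Ioi (0:ℝ), (Iio s).indicator (fun t : ℝ => t ^ 3) y := by
          refine integral_congr_ae (Filter.Eventually.of_forall fun y => ?_)
          by_cases hy : y ∈ Iio s <;>
            simp [indicator_of_mem, indicator_of_notMem, hy] <;> ring
        rw [h1, setIntegral_indicator measurableSet_Iio, Ioi_inter_Iio,
          ← integral_Ioc_eq_integral_Ioo, ← intervalIntegral.integral_of_le hs.le]
        rw [integral_pow]
        simp [Complex.volume_ball]
        ring

lemma area_image (c : ℂ) (hc : ‖c‖ < 1 / 2) (s : ℝ) (hs : 0 < s) (hs1 : s ≤ 1) :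
    volume ((fun z : ℂ => z + c * (starRingEnd ℂ z) ^ 2) '' ball (0 : ℂ) s)
      = ENNReal.ofReal (Real.pi * s ^ 2 - 2 * Real.pi * ‖c‖ ^ 2 * s ^ 4) := by
  rw [← lintegral_abs_det_fderiv_eq_addHaar_image volume measurableSet_ball
      (fun x _ => (hasFDerivAt_f c x).hasFDerivWithinAt)
      ((injOn_f c hc).mono (ball_subset_ball hs1))]
  have hcongr : ∫⁻ z in ball (0:ℂ) s, ENNReal.ofReal |(Lb (2 * c * starRingEnd ℂ z)).det|
      = ∫⁻ z in ball (0:ℂ) s, ENNReal.ofReal (1 - 4 * ‖c‖ ^ 2 * ‖z‖ ^ 2) := by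
    refine setLIntegral_congr_fun measurableSet_ball
      (fun z hz => ?_)
    simp only [mem_ball, dist_zero_right] at hz
    have hnorm : ‖2 * c * starRingEnd ℂ z‖ ^ 2 = 4 * ‖c‖ ^ 2 * ‖z‖ ^ 2 := by
      rw [norm_mul, norm_mul, RCLike.norm_conj]
      have h2 : ‖(2:ℂ)‖ = 2 := by simp
      rw [h2]; ring
    have hz1 : ‖z‖ < 1 := lt_of_lt_of_le hz hs1
    have ha : ‖c‖ ^ 2 < 1/4 := by nlinarith [norm_nonneg c]
    have hz2 : ‖z‖ ^ 2 ≤ 1 := by nlinarith [norm_nonneg z]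
    rw [Lb_det, hnorm, abs_of_nonneg]
    nlinarith [mul_le_mul_of_nonneg_left hz2 (sq_nonneg ‖c‖)]
  rw [hcongr]
  have hcont : Continuous (fun z : ℂ => 1 - 4 * ‖c‖ ^ 2 * ‖z‖ ^ 2) := by
    continuity
  have hint : IntegrableOn (fun z : ℂ => 1 - 4 * ‖c‖ ^ 2 * ‖z‖ ^ 2) (ball (0:ℂ) s) volume :=
    (hcont.continuousOn.integrableOn_compact (isCompact_closedBall _ _)).mono_set
      ball_subset_closedBall
  rw [← ofReal_integral_eq_lintegral_ofReal hint
      ((ae_restrict_iff' measurableSet_ball).2 (Filter.Eventually.of_forall fun z hz => by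
        simp only [mem_ball, dist_zero_right] at hz
        simp only [Pi.zero_apply]
        have hz1 : ‖z‖ < 1 := lt_of_lt_of_le hz hs1
        have ha : ‖c‖ ^ 2 < 1/4 := by nlinarith [norm_nonneg c]
        have hz2 : ‖z‖ ^ 2 ≤ 1 := by nlinarith [norm_nonneg z]
        nlinarith [mul_le_mul_of_nonneg_left hz2 (sq_nonneg ‖c‖)]))]
  congr 1
  have hint2 : IntegrableOn (fun z : ℂ => 4 * ‖c‖ ^ 2 * ‖z‖ ^ 2) (ball (0:ℂ) s) volume :=
    ((by continuity : Continuous (fun z : ℂ => 4 * ‖c‖ ^ 2 * ‖z‖ ^ 2)).continuousOn.integrableOn_compact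
      (isCompact_closedBall _ _)).mono_set ball_subset_closedBall
  have hint1 : IntegrableOn (fun _ : ℂ => (1:ℝ)) (ball (0:ℂ) s) volume :=
    integrableOn_const measure_ball_lt_top.ne
  rw [integral_sub hint1 hint2, setIntegral_const, integral_const_mul, ball_norm_sq_integral s hs]
  rw [measureReal_def, Complex.volume_ball]
  rw [ENNReal.toReal_mul, ENNReal.toReal_pow, ENNReal.toReal_ofReal hs.le, ENNReal.coe_toReal]
  rw [NNReal.coe_real_pi]
  simp only [smul_eq_mul, mul_one]
  ring

theorem harmonic_example_fails_convexity
    (c : ℂ) (hc0 : 0 < ‖c‖) (hc : ‖c‖ < 1 / 2)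
    (f : ℂ → ℂ) (hf : ∀ z : ℂ, f z = z + c * (starRingEnd ℂ z) ^ 2) :
    ∀ r : ℝ, 0 < r → r < 1 →
      ENNReal.ofReal (r ^ 2) * volume (f '' ball (0 : ℂ) 1)
        < volume (f '' ball (0 : ℂ) r) := by
  intro r hr hr1
  have hfe : f = fun z : ℂ => z + c * (starRingEnd ℂ z) ^ 2 := funext hf
  rw [hfe, area_image c hc 1 one_pos le_rfl, area_image c hc r hr hr1.le]
  rw [← ENNReal.ofReal_mul (by positivity)]
  have ha2 : ‖c‖ ^ 2 < 1 / 4 := by nlinarith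
  have h5 : 0 ≤ Real.pi - 2 * Real.pi * ‖c‖ ^ 2 := by nlinarith [Real.pi_pos]
  refine (ENNReal.ofReal_lt_ofReal_iff_of_nonneg ?_).2 ?_
  · nlinarith [mul_nonneg (sq_nonneg r) h5]
  · have hrr : r ^ 2 < 1 := by nlinarith
    have hr2 : r ^ 4 < r ^ 2 := by nlinarith [pow_pos hr 2]
    nlinarith [Real.pi_pos, mul_pos (mul_pos Real.pi_pos (mul_pos hc0 hc0)) (sub_pos.2 hr2)]
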